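/- Let G be a connected multigraph as above with |V| ≥ 2. Then the following are equivalent: (i) G is 2-connected; (ii) for every v ∈ V, the element [{v}] of Λ(G) is irreducible; (iii) Λ(G) is indecomposable. -/

import Mathlib

/-- The underlying simple graph of the multigraph with `e u v` edges joining `u` and
`v`: vertices `u ≠ v` are adjacent iff there is at least one edge between them. -/
def mgraph {V : Type*} (e : V → V → ℕ) : SimpleGraph V :=
  SimpleGraph.fromRel (fun u v => 0 < e u v)

/-- The bilinear pairing on `ℤ^V` given by
`B(x,y) = Σ_{unordered pairs {u,w}} e(u,w)(x_u − x_w)(y_u − y_w)`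
(written as half of the sum over ordered pairs; the division is exact since `e` is
symmetric). -/
def Bform {V : Type*} [Fintype V] (e : V → V → ℕ) (x y : V → ℤ) : ℤ :=
  (∑ u, ∑ w, (e u w : ℤ) * (x u - x w) * (y u - y w)) / 2

/-- The graph lattice `Λ(G) = ℤ^V / ℤ·[V]`, the quotient of `ℤ^V` by the span of the
all-ones vector. -/
abbrev GLat (V : Type*) [Fintype V] :=
  (V → ℤ) ⧸ (Submodule.span ℤ {(fun _ => (1 : ℤ) : V → ℤ)})

/-- The class of `x : ℤ^V` in the graph lattice `Λ(G)`. -/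
abbrev glmk {V : Type*} [Fintype V] (x : V → ℤ) : GLat V := Submodule.Quotient.mk x

/-- The pairing induced by `Bform` on the graph lattice, computed on (arbitrary)
representatives; it is well defined since `Bform` vanishes against constant vectors. -/
noncomputable def qform {V : Type*} [Fintype V] (e : V → V → ℕ) (a b : GLat V) : ℤ :=
  Bform e (Quotient.out a) (Quotient.out b)

/-- The indicator vector `[R] ∈ ℤ^V` of a finite subset `R ⊆ V`. -/
def indFn {V : Type*} [DecidableEq V] (R : Finset V) : V → ℤ :=
  fun u => if u ∈ R then 1 else 0

/-- An element of the graph lattice is irreducible if it is nonzero and cannot be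
written as `y + z` with `y, z` nonzero and `y·z ≥ 0`. -/
def GLIrreducible {V : Type*} [Fintype V] (e : V → V → ℕ) (x : GLat V) : Prop :=
  x ≠ 0 ∧ ¬ ∃ y z : GLat V, y ≠ 0 ∧ z ≠ 0 ∧ x = y + z ∧ 0 ≤ qform e y z


set_option linter.unusedSectionVars false
set_option linter.unusedVariables false

section basics
variable {V : Type*} [Fintype V] [DecidableEq V] (e : V → V → ℕ)

/-- The un-halved form. -/
def B2 (x y : V → ℤ) : ℤ := ∑ u, ∑ w, (e u w : ℤ) * (x u - x w) * (y u - y w)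

lemma even_sum_sym (t : V → V → ℤ) (hs : ∀ u w, t u w = t w u) (hd : ∀ u, t u u = 0)
    (s : Finset V) : 2 ∣ ∑ u ∈ s, ∑ w ∈ s, t u w := by
  classical
  induction s using Finset.induction_on with
  | empty => simp
  | @insert a s ha ih =>
    rw [Finset.sum_insert ha]
    have h1 : ∀ u ∈ s, ∑ w ∈ insert a s, t u w = t u a + ∑ w ∈ s, t u w := by
      intro u _; rw [Finset.sum_insert ha]
    rw [Finset.sum_congr rfl h1, Finset.sum_add_distrib, Finset.sum_insert ha, hd]
    have h2 : ∑ u ∈ s, t u a = ∑ w ∈ s, t a w :=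
      Finset.sum_congr rfl (fun u _ => hs u a)
    rw [h2]
    obtain ⟨m, hm⟩ := ih
    exact ⟨∑ w ∈ s, t a w + m, by linarith⟩



lemma glmk_out (a : GLat V) : glmk (Quotient.out a) = a := Quotient.out_eq a

lemma two_dvd_B2 (hsym : ∀ u v, e u v = e v u) (x y : V → ℤ) : 2 ∣ B2 e x y := by
  refine even_sum_sym _ (fun u w => ?_) (fun u => by simp) _
  rw [hsym u w]; ring

lemma two_mul_Bform (hsym : ∀ u v, e u v = e v u) (x y : V → ℤ) :
    2 * Bform e x y = B2 e x y :=
  Int.mul_ediv_cancel' (two_dvd_B2 e hsym x y)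

lemma Bform_eq_of_B2 (hsym : ∀ u v, e u v = e v u) {x y x' y' : V → ℤ}
    (h : B2 e x y = B2 e x' y') : Bform e x y = Bform e x' y' := by
  have h1 := two_mul_Bform e hsym x y
  have h2 := two_mul_Bform e hsym x' y'
  omega

lemma B2_const_add_left (x y : V → ℤ) (c : ℤ) :
    B2 e (c • (fun _ => (1:ℤ)) + x) y = B2 e x y := by
  unfold B2
  refine Finset.sum_congr rfl fun u _ => Finset.sum_congr rfl fun w _ => ?_
  simp only [Pi.add_apply, Pi.smul_apply, smul_eq_mul, mul_one]
  ring

lemma B2_add_left (x x' y : V → ℤ) : B2 e (x + x') y = B2 e x y + B2 e x' y := by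
  unfold B2
  rw [← Finset.sum_add_distrib]
  refine Finset.sum_congr rfl fun u _ => ?_
  rw [← Finset.sum_add_distrib]
  refine Finset.sum_congr rfl fun w _ => ?_
  simp only [Pi.add_apply]; ring

lemma B2_smul_left (c : ℤ) (x y : V → ℤ) : B2 e (c • x) y = c * B2 e x y := by
  unfold B2
  rw [Finset.mul_sum]
  refine Finset.sum_congr rfl fun u _ => ?_
  rw [Finset.mul_sum]
  refine Finset.sum_congr rfl fun w _ => ?_
  simp only [Pi.smul_apply, smul_eq_mul]; ring

lemma B2_comm (x y : V → ℤ) : B2 e x y = B2 e y x := by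
  unfold B2
  refine Finset.sum_congr rfl fun u _ => Finset.sum_congr rfl fun w _ => ?_
  ring

lemma Bform_add_left (hsym : ∀ u v, e u v = e v u) (x x' y : V → ℤ) :
    Bform e (x + x') y = Bform e x y + Bform e x' y := by
  have h1 := two_mul_Bform e hsym (x + x') y
  have h2 := two_mul_Bform e hsym x y
  have h3 := two_mul_Bform e hsym x' y
  have h4 := B2_add_left e x x' y
  omega

lemma Bform_smul_left (hsym : ∀ u v, e u v = e v u) (c : ℤ) (x y : V → ℤ) :
    Bform e (c • x) y = c * Bform e x y := by
  have h1 := two_mul_Bform e hsym (c • x) y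
  have h2 := two_mul_Bform e hsym x y
  have h3 := B2_smul_left e c x y
  have : 2 * Bform e (c • x) y = 2 * (c * Bform e x y) := by
    rw [h1, h3, ← h2]; ring
  omega

/-- key: qform on classes of representatives. -/
lemma qform_mk (hsym : ∀ u v, e u v = e v u) (f g : V → ℤ) :
    qform e (glmk f) (glmk g) = Bform e f g := by
  classical
  have hf : glmk (Quotient.out (glmk f)) = glmk f := Quotient.out_eq _
  have hg : glmk (Quotient.out (glmk g)) = glmk g := Quotient.out_eq _
  rw [Submodule.Quotient.eq] at hf hg
  obtain ⟨c, hc⟩ := Submodule.mem_span_singleton.mp hf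
  obtain ⟨d, hd⟩ := Submodule.mem_span_singleton.mp hg
  have hf' : Quotient.out (glmk f) = c • (fun _ => (1:ℤ)) + f := by
    rw [hc]; abel
  have hg' : Quotient.out (glmk g) = d • (fun _ => (1:ℤ)) + g := by
    rw [hd]; abel
  unfold qform
  rw [hf', hg']
  refine Bform_eq_of_B2 e hsym ?_
  calc B2 e (c • (fun _ => (1:ℤ)) + f) (d • (fun _ => (1:ℤ)) + g)
      = B2 e f (d • (fun _ => (1:ℤ)) + g) := B2_const_add_left e _ _ _
    _ = B2 e (d • (fun _ => (1:ℤ)) + g) f := B2_comm e _ _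
    _ = B2 e g f := B2_const_add_left e _ _ _
    _ = B2 e f g := B2_comm e _ _

lemma qform_comm (hsym : ∀ u v, e u v = e v u) (a b : GLat V) :
    qform e a b = qform e b a := by
  unfold qform
  exact Bform_eq_of_B2 e hsym (B2_comm e _ _)

lemma qform_add_left (hsym : ∀ u v, e u v = e v u) (a a' b : GLat V) :
    qform e (a + a') b = qform e a b + qform e a' b := by
  have key : a + a' = glmk (Quotient.out a + Quotient.out a') := by
    conv_lhs => rw [← glmk_out a, ← glmk_out a']
    rfl
  conv_rhs => rw [← glmk_out a, ← glmk_out a', ← glmk_out b]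
  conv_lhs => rw [key, ← glmk_out b]
  rw [qform_mk e hsym, qform_mk e hsym, qform_mk e hsym, Bform_add_left e hsym]

lemma qform_smul_left (hsym : ∀ u v, e u v = e v u) (c : ℤ) (a b : GLat V) :
    qform e (c • a) b = c * qform e a b := by
  have key : c • a = glmk (c • Quotient.out a) := by
    conv_lhs => rw [← glmk_out a]
    rfl
  conv_rhs => rw [← glmk_out a, ← glmk_out b]
  conv_lhs => rw [key, ← glmk_out b]
  rw [qform_mk e hsym, qform_mk e hsym, Bform_smul_left e hsym]

lemma qform_zero_left (hsym : ∀ u v, e u v = e v u) (b : GLat V) :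
    qform e 0 b = 0 := by
  have h := qform_smul_left e hsym 0 b b
  simpa using h

end basics

section layer2
variable {V : Type*} [Fintype V] [DecidableEq V] (e : V → V → ℕ)

lemma glmk_eq_zero (f : V → ℤ) : glmk f = 0 ↔ ∃ c : ℤ, ∀ u, f u = c := by
  rw [Submodule.Quotient.mk_eq_zero, Submodule.mem_span_singleton]
  constructor
  · rintro ⟨c, hc⟩
    exact ⟨c, fun u => by rw [← hc]; simp⟩
  · rintro ⟨c, hc⟩
    exact ⟨c, funext fun u => by simp [hc u]⟩

lemma glmk_ind_ne_zero {R : Finset V} {a b : V} (ha : a ∈ R) (hb : b ∉ R) :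
    glmk (indFn R) ≠ 0 := by
  intro h0
  obtain ⟨c, hc⟩ := (glmk_eq_zero _).mp h0
  have h1 := hc a
  have h2 := hc b
  simp [indFn, ha, hb] at h1 h2
  omega

lemma glmk_neg_ind_ne_zero {R : Finset V} {a b : V} (ha : a ∈ R) (hb : b ∉ R) :
    glmk (-(indFn R)) ≠ 0 := by
  intro h0
  obtain ⟨c, hc⟩ := (glmk_eq_zero _).mp h0
  have h1 := hc a
  have h2 := hc b
  simp [indFn, ha, hb] at h1 h2
  omega

lemma mgraph_adj (hsym : ∀ u v, e u v = e v u) {u w : V} :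
    (mgraph e).Adj u w ↔ u ≠ w ∧ 0 < e u w := by
  unfold mgraph
  rw [SimpleGraph.fromRel_adj]
  constructor
  · rintro ⟨h1, h2 | h2⟩
    · exact ⟨h1, h2⟩
    · exact ⟨h1, by rw [hsym]; exact h2⟩
  · rintro ⟨h1, h2⟩
    exact ⟨h1, Or.inl h2⟩

lemma eq_of_reachable {α : Type*} {G : SimpleGraph α} (F : α → ℤ)
    (hF : ∀ a b, G.Adj a b → F a = F b) {a b : α} (h : G.Reachable a b) :
    F a = F b := by
  obtain ⟨p⟩ := h
  induction p with
  | nil => rfl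
  | cons h p ih => exact (hF _ _ h).trans ih

lemma exists_adj (hconn : (mgraph e).Connected) {v u : V} (hne : u ≠ v) :
    ∃ w, (mgraph e).Adj v w := by
  obtain ⟨p⟩ := hconn.preconnected v u
  cases p with
  | nil => exact absurd rfl hne.symm
  | cons h p => exact ⟨_, h⟩

lemma B2_delta (hsym : ∀ u v, e u v = e v u) {u w : V} (huw : u ≠ w) :
    B2 e (indFn {u}) (indFn {w}) = -2 * e u w := by
  classical
  have ht : ∀ p q : V,
      (e p q : ℤ) * (indFn {u} p - indFn {u} q) * (indFn {w} p - indFn {w} q)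
      = (if p = u ∧ q = w then -(e u w : ℤ) else 0)
        + (if p = w ∧ q = u then -(e u w : ℤ) else 0) := by
    intro p q
    by_cases hpu : p = u <;> by_cases hpw : p = w <;> by_cases hqu : q = u <;>
      by_cases hqw : q = w <;>
      simp_all [indFn]
  unfold B2
  rw [Finset.sum_congr rfl fun p _ => Finset.sum_congr rfl fun q _ => ht p q]
  have hsplit : ∀ p : V, (∑ q : V, ((if p = u ∧ q = w then -(e u w : ℤ) else 0)
      + (if p = w ∧ q = u then -(e u w : ℤ) else 0)))
      = (if p = u then -(e u w : ℤ) else 0) + (if p = w then -(e u w : ℤ) else 0) := by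
    intro p
    rw [Finset.sum_add_distrib]
    congr 1 <;> simp [ite_and]
  rw [Finset.sum_congr rfl fun p _ => hsplit p, Finset.sum_add_distrib]
  simp
  ring

lemma qform_delta (hsym : ∀ u v, e u v = e v u) {u w : V} (huw : u ≠ w) :
    qform e (glmk (indFn {u})) (glmk (indFn {w})) = -(e u w) := by
  rw [qform_mk e hsym]
  have h1 := two_mul_Bform e hsym (indFn {u}) (indFn ({w} : Finset V))
  rw [B2_delta e hsym huw] at h1
  omega

lemma top_of_deltas (L : Submodule ℤ (GLat V)) (h : ∀ v, glmk (indFn {v}) ∈ L) :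
    L = ⊤ := by
  rw [eq_top_iff]
  rintro x -
  rw [← glmk_out x]
  have hx : Quotient.out x = ∑ v : V, (Quotient.out x v) • indFn {v} := by
    funext u
    simp only [Finset.sum_apply, Pi.smul_apply, indFn, Finset.mem_singleton,
      smul_eq_mul, mul_ite, mul_one, mul_zero]
    rw [Finset.sum_ite_eq Finset.univ u (fun v => Quotient.out x v)]
    simp
  rw [hx]
  have : glmk (∑ v : V, (Quotient.out x v) • indFn {v})
      = ∑ v : V, (Quotient.out x v) • glmk (indFn {v}) := by
    rw [show (glmk (∑ v : V, (Quotient.out x v) • indFn {v}))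
      = Submodule.mkQ _ (∑ v : V, (Quotient.out x v) • indFn {v}) from rfl]
    rw [map_sum]
    rfl
  rw [this]
  exact Submodule.sum_mem _ (fun v _ => Submodule.smul_mem _ _ (h v))

/-- positive definiteness -/
lemma qform_pos_def (hsym : ∀ u v, e u v = e v u) (hconn : (mgraph e).Connected)
    (x : GLat V) (h : qform e x x = 0) : x = 0 := by
  classical
  set f := Quotient.out x with hf
  have hB2 : B2 e f f = 0 := by
    have h2 := two_mul_Bform e hsym f f
    unfold qform at h
    rw [← hf] at h
    omega
  have hterm : ∀ u ∈ (Finset.univ : Finset V), ∀ w ∈ (Finset.univ : Finset V),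
      (0:ℤ) ≤ (e u w : ℤ) * (f u - f w) * (f u - f w) := by
    intro u _ w _
    have : (0:ℤ) ≤ (e u w : ℤ) := Int.natCast_nonneg _
    nlinarith [sq_nonneg (f u - f w)]
  have hall : ∀ u w : V, (e u w : ℤ) * (f u - f w) * (f u - f w) = 0 := by
    have houter := (Finset.sum_eq_zero_iff_of_nonneg
      (fun u hu => Finset.sum_nonneg (fun w hw => hterm u hu w hw))).mp hB2
    intro u w
    have hinner := (Finset.sum_eq_zero_iff_of_nonneg (fun w hw => hterm u (Finset.mem_univ u) w hw)).mp
      (houter u (Finset.mem_univ u))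
    exact hinner w (Finset.mem_univ w)
  have hadj : ∀ a b : V, (mgraph e).Adj a b → f a = f b := by
    intro a b hab
    rw [mgraph_adj e hsym] at hab
    have h0 := hall a b
    have he : (0:ℤ) < (e a b : ℤ) := by exact_mod_cast hab.2
    rcases mul_eq_zero.mp h0 with h1 | h1
    · rcases mul_eq_zero.mp h1 with h2 | h2 <;> linarith
    · linarith
  have : Nonempty V := hconn.nonempty
  obtain ⟨v0⟩ := this
  have hconst : ∀ u : V, f u = f v0 :=
    fun u => eq_of_reachable f hadj (hconn.preconnected u v0)
  have : glmk f = 0 := by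
    rw [glmk_eq_zero]
    exact ⟨f v0, hconst⟩
  rw [← glmk_out x, ← hf, this]

end layer2

section layer3
variable {V : Type*} [Fintype V] [DecidableEq V] (e : V → V → ℕ)

lemma int_step {d s : ℤ} (hs1 : -1 ≤ s) (hs2 : s ≤ 1) : d * (s - d) ≤ 0 := by
  have h3 : d = 0 ∨ 1 ≤ d ∨ d ≤ -1 := by omega
  rcases h3 with h | h | h
  · simp [h]
  · have := mul_nonneg (by linarith : (0:ℤ) ≤ d) (by linarith : (0:ℤ) ≤ d - s)
    nlinarith
  · have := mul_nonneg (by linarith : (0:ℤ) ≤ -d) (by linarith : (0:ℤ) ≤ s - d)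
    nlinarith

lemma irr_of_conn (hsym : ∀ u v, e u v = e v u) (hconn : (mgraph e).Connected)
    (hcard : 2 ≤ Fintype.card V) (v : V)
    (hv : (SimpleGraph.induce (({v}ᶜ : Finset V) : Set V) (mgraph e)).Connected) :
    GLIrreducible e (glmk (indFn {v})) := by
  classical
  obtain ⟨u0, hu0⟩ := Fintype.exists_ne_of_one_lt_card (by omega) v
  constructor
  · exact glmk_ind_ne_zero (R := {v}) (a := v) (b := u0) (Finset.mem_singleton_self v)
      (by simp [Finset.mem_singleton, hu0])
  rintro ⟨y, z, hy, hz, hsum, hq⟩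
  set f := Quotient.out y with hfdef
  set g := indFn {v} - f with hgdef
  have hyf : glmk f = y := glmk_out y
  have hzg : z = glmk g := by
    have h1 : glmk g = glmk (indFn {v}) - glmk f := rfl
    rw [h1, hyf, hsum]; abel
  -- qform y z = Bform f g
  have hqfg : qform e y z = Bform e f g := by
    rw [← hyf, hzg, qform_mk e hsym]
  -- the indicator has values in {0,1}
  have hind : ∀ u : V, indFn ({v} : Finset V) u = 0 ∨ indFn ({v} : Finset V) u = 1 := by
    intro u; unfold indFn; split_ifs <;> simp
  -- every term of B2 e f g is nonpositive
  have hterm : ∀ u w : V,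
      (e u w : ℤ) * (f u - f w) * (g u - g w) ≤ 0 := by
    intro u w
    have hg' : g u - g w = (indFn {v} u - indFn {v} w) - (f u - f w) := by
      simp [hgdef]; ring
    rw [hg']
    have hs1 : -1 ≤ indFn ({v} : Finset V) u - indFn ({v} : Finset V) w := by
      rcases hind u with h | h <;> rcases hind w with h' | h' <;> rw [h, h'] <;> norm_num
    have hs2 : indFn ({v} : Finset V) u - indFn ({v} : Finset V) w ≤ 1 := by
      rcases hind u with h | h <;> rcases hind w with h' | h' <;> rw [h, h'] <;> norm_num
    have hstep := int_step (d := f u - f w)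
      (s := indFn ({v} : Finset V) u - indFn ({v} : Finset V) w) hs1 hs2
    have he : (0:ℤ) ≤ (e u w : ℤ) := Int.natCast_nonneg _
    calc (e u w : ℤ) * (f u - f w) * ((indFn {v} u - indFn {v} w) - (f u - f w))
        = (e u w : ℤ) * ((f u - f w) * ((indFn {v} u - indFn {v} w) - (f u - f w))) := by ring
      _ ≤ 0 := mul_nonpos_of_nonneg_of_nonpos he hstep
  -- B2 e f g = 0 hence all terms are zero
  have hB2le : B2 e f g ≤ 0 :=
    Finset.sum_nonpos (fun u _ => Finset.sum_nonpos (fun w _ => hterm u w))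
  have hB2ge : 0 ≤ B2 e f g := by
    have h2 := two_mul_Bform e hsym f g
    rw [hqfg] at hq
    omega
  have hB2 : B2 e f g = 0 := le_antisymm hB2le hB2ge
  have hallzero : ∀ u w : V, (e u w : ℤ) * (f u - f w) * (g u - g w) = 0 := by
    have houter := (Finset.sum_eq_zero_iff_of_nonpos
      (fun u _ => Finset.sum_nonpos (fun w _ => hterm u w))).mp hB2
    intro u w
    have hinner := (Finset.sum_eq_zero_iff_of_nonpos
      (fun w _ => hterm u w)).mp (houter u (Finset.mem_univ u))
    exact hinner w (Finset.mem_univ w)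
  -- f is constant on the complement of v
  have hfc : ∀ u w : V, u ≠ v → w ≠ v → (mgraph e).Adj u w → f u = f w := by
    intro u w hu hw hadj
    rw [mgraph_adj e hsym] at hadj
    have h0 := hallzero u w
    have hiu : indFn ({v} : Finset V) u = 0 := by simp [indFn, hu]
    have hiw : indFn ({v} : Finset V) w = 0 := by simp [indFn, hw]
    have hg' : g u - g w = -(f u - f w) := by
      simp [hgdef, hiu, hiw]; ring
    rw [hg'] at h0
    have he : (0:ℤ) < (e u w : ℤ) := by exact_mod_cast hadj.2
    rcases mul_eq_zero.mp h0 with h1 | h1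
    · rcases mul_eq_zero.mp h1 with h2 | h2 <;> linarith
    · linarith
  -- transfer along the induced connected graph
  have hmemS : ∀ u : V, u ∈ ((({v}ᶜ : Finset V) : Set V)) ↔ u ≠ v := by
    intro u; simp
  have hconst : ∀ u : V, u ≠ v → f u = f u0 := by
    intro u hu
    have ha : u ∈ ((({v}ᶜ : Finset V) : Set V)) := (hmemS u).mpr hu
    have hb : u0 ∈ ((({v}ᶜ : Finset V) : Set V)) := (hmemS u0).mpr hu0
    have hreach := hv.preconnected ⟨u, ha⟩ ⟨u0, hb⟩
    have hFadj : ∀ a b : ((({v}ᶜ : Finset V) : Set V)),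
        (SimpleGraph.induce (({v}ᶜ : Finset V) : Set V) (mgraph e)).Adj a b →
        (fun s => f s.1) a = (fun s => f s.1) b := by
      rintro ⟨a, haa⟩ ⟨b, hbb⟩ hadj
      exact hfc a b ((hmemS a).mp haa) ((hmemS b).mp hbb) hadj
    exact eq_of_reachable (fun s => f s.1) hFadj hreach
  -- v has a neighbour
  obtain ⟨w0, hw0⟩ := exists_adj e hconn hu0
  have hw0' := (mgraph_adj e hsym).mp hw0
  have hw0v : w0 ≠ v := fun h => hw0'.1 h.symm
  -- the term at (v, w0) vanishes
  have h0 := hallzero v w0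
  have hiv : indFn ({v} : Finset V) v = 1 := by simp [indFn]
  have hiw : indFn ({v} : Finset V) w0 = 0 := by simp [indFn, hw0v]
  have hg' : g v - g w0 = 1 - (f v - f w0) := by
    simp [hgdef, hiv, hiw]; ring
  rw [hg'] at h0
  have he : (0:ℤ) < (e v w0 : ℤ) := by exact_mod_cast hw0'.2
  have hd : f v - f w0 = 0 ∨ f v - f w0 = 1 := by
    rcases mul_eq_zero.mp h0 with h1 | h1
    · rcases mul_eq_zero.mp h1 with h2 | h2
      · linarith
      · left; exact h2
    · right; linarith
  set c := f u0 with hc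
  have hfw0 : f w0 = c := hconst w0 hw0v
  rcases hd with hd | hd
  · -- f constant: y = 0
    apply hy
    rw [← hyf, glmk_eq_zero]
    refine ⟨c, fun u => ?_⟩
    by_cases hu : u = v
    · rw [hu]; omega
    · exact hconst u hu
  · -- g constant: z = 0
    apply hz
    rw [hzg, glmk_eq_zero]
    refine ⟨-c, fun u => ?_⟩
    have : g u = indFn ({v} : Finset V) u - f u := rfl
    rw [this]
    by_cases hu : u = v
    · rw [hu, hiv]; omega
    · have h1 : indFn ({v} : Finset V) u = 0 := by simp [indFn, hu]
      rw [h1, hconst u hu]; omega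

end layer3

section layer4
variable {V : Type*} [Fintype V] [DecidableEq V] (e : V → V → ℕ)

/-- From a cut at `v` (partition `A ∪ B` of `V∖{v}` with no edges between),
`[{v}]` is reducible. -/
lemma red_of_cut (hsym : ∀ u v, e u v = e v u) (v : V) (A B : Finset V)
    (hA : A.Nonempty) (hB : B.Nonempty)
    (hdisj : ∀ u, u ∈ A → u ∉ B) (hcover : ∀ u, u ≠ v → (u ∈ A ∨ u ∈ B))
    (hvA : v ∉ A) (hvB : v ∉ B)
    (hE : ∀ u w, u ∈ A → w ∈ B → e u w = 0) :
    ∃ y z : GLat V, y ≠ 0 ∧ z ≠ 0 ∧ glmk (indFn {v}) = y + z ∧ 0 ≤ qform e y z := by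
  classical
  obtain ⟨a, ha⟩ := hA
  obtain ⟨b, hb⟩ := hB
  have hE' : ∀ u w, u ∈ B → w ∈ A → e u w = 0 := by
    intro u w hu hw; rw [hsym]; exact hE w u hw hu
  refine ⟨glmk (-(indFn A)), glmk (-(indFn B)), glmk_neg_ind_ne_zero ha hvA,
    glmk_neg_ind_ne_zero hb hvB, ?_, ?_⟩
  · have h1 : glmk (-(indFn A)) + glmk (-(indFn B)) = glmk (-(indFn A) + -(indFn B)) := rfl
    rw [h1, Submodule.Quotient.eq, Submodule.mem_span_singleton]
    refine ⟨1, funext fun u => ?_⟩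
    have : (indFn ({v} : Finset V) - (-(indFn A) + -(indFn B))) u
        = indFn ({v} : Finset V) u + indFn A u + indFn B u := by
      simp; ring
    rw [this]
    by_cases huv : u = v
    · subst huv; simp [indFn, hvA, hvB]
    · rcases hcover u huv with h | h
      · simp [indFn, h, hdisj u h, huv]
      · have : u ∉ A := fun h' => hdisj u h' h
        simp [indFn, h, this, huv]
  · have hq : qform e (glmk (-(indFn A))) (glmk (-(indFn B)))
        = Bform e (-(indFn A)) (-(indFn B)) := qform_mk e hsym _ _
    have ht : ∀ u w : V,
        (e u w : ℤ) * ((-(indFn A)) u - (-(indFn A)) w) * ((-(indFn B)) u - (-(indFn B)) w) = 0 := by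
      intro u w
      by_cases huA : u ∈ A
      · by_cases hwA : w ∈ A
        · simp [indFn, huA, hwA]
        · by_cases hwB : w ∈ B
          · simp [hE u w huA hwB]
          · have huB : u ∉ B := hdisj u huA
            simp [indFn, huB, hwB]
      · by_cases hwA : w ∈ A
        · by_cases huB : u ∈ B
          · simp [hE' u w huB hwA]
          · have hwB : w ∉ B := hdisj w hwA
            simp [indFn, huB, hwB]
        · simp [indFn, huA, hwA]
    have hB2 : B2 e (-(indFn A)) (-(indFn B)) = 0 := by
      unfold B2
      exact Finset.sum_eq_zero (fun u _ => Finset.sum_eq_zero (fun w _ => ht u w))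
    have h2 := two_mul_Bform e hsym (-(indFn A)) (-(indFn B))
    rw [hq]
    omega

/-- From disconnectedness of the induced graph on `{v}ᶜ`, produce a cut. -/
lemma cut_of_not_conn (hcard : 2 ≤ Fintype.card V) (v : V)
    (hnc : ¬ (SimpleGraph.induce (({v}ᶜ : Finset V) : Set V) (mgraph e)).Connected) :
    ∃ A B : Finset V, A.Nonempty ∧ B.Nonempty ∧
      (∀ u, u ∈ A → u ∉ B) ∧ (∀ u, u ≠ v → (u ∈ A ∨ u ∈ B)) ∧
      v ∉ A ∧ v ∉ B ∧ (∀ u w, u ∈ A → w ∈ B → e u w = 0) := by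
  classical
  obtain ⟨u0, hu0⟩ := Fintype.exists_ne_of_one_lt_card (by omega) v
  have hmemS : ∀ u : V, u ∈ ((({v}ᶜ : Finset V) : Set V)) ↔ u ≠ v := by
    intro u; simp
  set G' := SimpleGraph.induce (({v}ᶜ : Finset V) : Set V) (mgraph e) with hG'
  have hne : Nonempty ((({v}ᶜ : Finset V) : Set V)) := ⟨⟨u0, (hmemS u0).mpr hu0⟩⟩
  have hnp : ¬ G'.Preconnected := by
    intro hp
    haveI := hne
    exact hnc (SimpleGraph.Connected.mk hp)
  rw [SimpleGraph.Preconnected] at hnp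
  push_neg at hnp
  obtain ⟨sa, sb, hab⟩ := hnp
  refine ⟨Finset.univ.filter (fun u => ∃ hu : u ≠ v, G'.Reachable sa ⟨u, (hmemS u).mpr hu⟩),
    Finset.univ.filter (fun u => ∃ hu : u ≠ v, ¬ G'.Reachable sa ⟨u, (hmemS u).mpr hu⟩),
    ⟨sa.1, ?_⟩, ⟨sb.1, ?_⟩, ?_, ?_, ?_, ?_, ?_⟩
  · simp only [Finset.mem_filter, Finset.mem_univ, true_and]
    refine ⟨(hmemS sa.1).mp sa.2, ?_⟩
    have : (⟨sa.1, (hmemS sa.1).mpr ((hmemS sa.1).mp sa.2)⟩ : (({v}ᶜ : Finset V) : Set V)) = sa :=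
      Subtype.ext rfl
    rw [this]
  · simp only [Finset.mem_filter, Finset.mem_univ, true_and]
    refine ⟨(hmemS sb.1).mp sb.2, ?_⟩
    have : (⟨sb.1, (hmemS sb.1).mpr ((hmemS sb.1).mp sb.2)⟩ : (({v}ᶜ : Finset V) : Set V)) = sb :=
      Subtype.ext rfl
    rw [this]
    exact hab
  · intro u hu hu'
    simp only [Finset.mem_filter, Finset.mem_univ, true_and] at hu hu'
    obtain ⟨h1, h2⟩ := hu
    obtain ⟨h1', h2'⟩ := hu'
    exact h2' h2
  · intro u hu
    by_cases hr : G'.Reachable sa ⟨u, (hmemS u).mpr hu⟩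
    · left; simp only [Finset.mem_filter, Finset.mem_univ, true_and]; exact ⟨hu, hr⟩
    · right; simp only [Finset.mem_filter, Finset.mem_univ, true_and]; exact ⟨hu, hr⟩
  · simp only [Finset.mem_filter, Finset.mem_univ, true_and]
    rintro ⟨h, -⟩; exact h rfl
  · simp only [Finset.mem_filter, Finset.mem_univ, true_and]
    rintro ⟨h, -⟩; exact h rfl
  · intro u w hu hw
    simp only [Finset.mem_filter, Finset.mem_univ, true_and] at hu hw
    obtain ⟨huv, hur⟩ := hu
    obtain ⟨hwv, hwr⟩ := hw
    by_contra hne0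
    have hpos : 0 < e u w := Nat.pos_of_ne_zero hne0
    have huw : u ≠ w := by
      rintro rfl; exact hwr hur
    have hadj : (mgraph e).Adj u w := by
      unfold mgraph; rw [SimpleGraph.fromRel_adj]; exact ⟨huw, Or.inl hpos⟩
    have hadj' : G'.Adj ⟨u, (hmemS u).mpr huv⟩ ⟨w, (hmemS w).mpr hwv⟩ := hadj
    exact hwr (hur.trans hadj'.reachable)

lemma exists_boundary {α : Type*} {G : SimpleGraph α} (P : α → Prop) :
    ∀ {x y : α}, G.Walk x y → P x → ¬ P y → ∃ u w, P u ∧ ¬ P w ∧ G.Adj u w := by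
  intro x y p
  induction p with
  | nil => intro h h'; exact absurd h h'
  | @cons x c y h p ih =>
    intro hx hy
    by_cases hc : P c
    · exact ih hc hy
    · exact ⟨x, c, hx, hc, h⟩

/-- sum of all delta classes is zero -/
lemma sum_deltas (hcard : 1 ≤ Fintype.card V) :
    ∑ u : V, glmk (indFn ({u} : Finset V)) = 0 := by
  classical
  have h1 : ∑ u : V, glmk (indFn ({u} : Finset V)) = glmk (∑ u : V, indFn ({u} : Finset V)) := by
    rw [show (glmk (∑ u : V, indFn ({u} : Finset V)))
      = Submodule.mkQ _ (∑ u : V, indFn ({u} : Finset V)) from rfl]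
    rw [map_sum]
    rfl
  rw [h1, glmk_eq_zero]
  refine ⟨1, fun w => ?_⟩
  simp only [Finset.sum_apply, indFn, Finset.mem_singleton]
  rw [Finset.sum_ite_eq Finset.univ w (fun _ => (1:ℤ))]
  simp

/-- From a cut at `v`, an orthogonal decomposition of the lattice. -/
lemma decomp_of_cut (hsym : ∀ u v, e u v = e v u) (hconn : (mgraph e).Connected)
    (hcard : 2 ≤ Fintype.card V) (v : V) (A B : Finset V)
    (hA : A.Nonempty) (hB : B.Nonempty)
    (hdisj : ∀ u, u ∈ A → u ∉ B) (hcover : ∀ u, u ≠ v → (u ∈ A ∨ u ∈ B))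
    (hvA : v ∉ A) (hvB : v ∉ B)
    (hE : ∀ u w, u ∈ A → w ∈ B → e u w = 0) :
    ∃ L₁ L₂ : Submodule ℤ (GLat V), L₁ ≠ ⊥ ∧ L₂ ≠ ⊥ ∧
      L₁ ⊓ L₂ = ⊥ ∧ L₁ ⊔ L₂ = ⊤ ∧ ∀ a ∈ L₁, ∀ b ∈ L₂, qform e a b = 0 := by
  classical
  obtain ⟨a, ha⟩ := hA
  obtain ⟨b, hb⟩ := hB
  set L₁ := Submodule.span ℤ ((fun u => glmk (indFn ({u} : Finset V))) '' (A : Set V)) with hL1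
  set L₂ := Submodule.span ℤ ((fun u => glmk (indFn ({u} : Finset V))) '' (B : Set V)) with hL2
  -- orthogonality
  have horth : ∀ x ∈ L₁, ∀ y ∈ L₂, qform e x y = 0 := by
    intro x hx
    induction hx using Submodule.span_induction with
    | mem x hxmem =>
      obtain ⟨u, huA, rfl⟩ := hxmem
      intro y hy
      induction hy using Submodule.span_induction with
      | mem y hymem =>
        obtain ⟨w, hwB, rfl⟩ := hymem
        have huw : u ≠ w := fun h => hdisj u huA (h ▸ hwB)
        rw [qform_delta e hsym huw, hE u w huA hwB]
        simp
      | zero =>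
        rw [qform_comm e hsym, qform_zero_left e hsym]
      | add y z hy hz ihy ihz =>
        rw [qform_comm e hsym, qform_add_left e hsym,
          qform_comm e hsym y, qform_comm e hsym z, ihy, ihz]
        norm_num
      | smul c y hy ihy =>
        rw [qform_comm e hsym, qform_smul_left e hsym, qform_comm e hsym y, ihy, mul_zero]
    | zero =>
      intro y hy; rw [qform_zero_left e hsym]
    | add x z hx hz ihx ihz =>
      intro y hy
      rw [qform_add_left e hsym, ihx y hy, ihz y hy]
      norm_num
    | smul c x hx ihx =>
      intro y hy
      rw [qform_smul_left e hsym, ihx y hy, mul_zero]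
  -- all deltas in the sup
  have hsup : L₁ ⊔ L₂ = ⊤ := by
    apply top_of_deltas
    intro u
    by_cases huv : u = v
    · subst huv
      have hsd := sum_deltas (V := V) (by omega)
      have h2 : glmk (indFn ({u} : Finset V))
          = - ∑ w ∈ Finset.univ.erase u, glmk (indFn ({w} : Finset V)) := by
        have h3 := Finset.add_sum_erase Finset.univ
          (fun w => glmk (indFn ({w} : Finset V))) (Finset.mem_univ u)
        rw [hsd] at h3
        exact eq_neg_of_add_eq_zero_left h3
      rw [h2]
      refine neg_mem (Submodule.sum_mem _ (fun w hw => ?_))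
      have hwv : w ≠ u := (Finset.mem_erase.mp hw).1
      rcases hcover w hwv with h | h
      · exact Submodule.mem_sup_left (Submodule.subset_span ⟨w, h, rfl⟩)
      · exact Submodule.mem_sup_right (Submodule.subset_span ⟨w, h, rfl⟩)
    · rcases hcover u huv with h | h
      · exact Submodule.mem_sup_left (Submodule.subset_span ⟨u, h, rfl⟩)
      · exact Submodule.mem_sup_right (Submodule.subset_span ⟨u, h, rfl⟩)
  refine ⟨L₁, L₂, ?_, ?_, ?_, hsup, horth⟩
  · intro hbot
    have hmem : glmk (indFn ({a} : Finset V)) ∈ L₁ := Submodule.subset_span ⟨a, ha, rfl⟩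
    rw [hbot, Submodule.mem_bot] at hmem
    have hav : v ≠ a := fun h => hvA (h ▸ ha)
    exact glmk_ind_ne_zero (R := {a}) (a := a) (b := v) (Finset.mem_singleton_self a)
      (by simp [Finset.mem_singleton, hav]) hmem
  · intro hbot
    have hmem : glmk (indFn ({b} : Finset V)) ∈ L₂ := Submodule.subset_span ⟨b, hb, rfl⟩
    rw [hbot, Submodule.mem_bot] at hmem
    have hbv : v ≠ b := fun h => hvB (h ▸ hb)
    exact glmk_ind_ne_zero (R := {b}) (a := b) (b := v) (Finset.mem_singleton_self b)
      (by simp [Finset.mem_singleton, hbv]) hmem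
  · rw [eq_bot_iff]
    intro x hx
    rw [Submodule.mem_bot]
    exact qform_pos_def e hsym hconn x (horth x hx.1 x hx.2)

end layer4

/-- For a connected multigraph `G` with at least two vertices, the following are
equivalent: (i) `G` is 2-connected; (ii) every class `[{v}]` is irreducible in `Λ(G)`;
(iii) `Λ(G)` is indecomposable. -/
theorem stmt12 {V : Type*} [Fintype V] [DecidableEq V] (e : V → V → ℕ)
    (hsym : ∀ u v, e u v = e v u) (hloop : ∀ v, e v v = 0)
    (hconn : (mgraph e).Connected)
    (hcard : 2 ≤ Fintype.card V) :
    ((∀ v : V, (SimpleGraph.induce (({v}ᶜ : Finset V) : Set V) (mgraph e)).Connected) ↔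
      (∀ v : V, GLIrreducible e (glmk (indFn {v})))) ∧
    ((∀ v : V, GLIrreducible e (glmk (indFn {v}))) ↔
      ¬ ∃ L₁ L₂ : Submodule ℤ (GLat V), L₁ ≠ ⊥ ∧ L₂ ≠ ⊥ ∧
        L₁ ⊓ L₂ = ⊥ ∧ L₁ ⊔ L₂ = ⊤ ∧ ∀ a ∈ L₁, ∀ b ∈ L₂, qform e a b = 0) := by
  classical
  constructor
  · constructor
    · intro hi v
      exact irr_of_conn e hsym hconn hcard v (hi v)
    · intro hii v
      by_contra hnc
      obtain ⟨A, B, hA, hB, hdisj, hcover, hvA, hvB, hE⟩ := cut_of_not_conn e hcard v hnc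
      exact (hii v).2 (red_of_cut e hsym v A B hA hB hdisj hcover hvA hvB hE)
  · constructor
    · rintro hii ⟨L₁, L₂, h1, h2, hinf, hsup, horth⟩
      have hvin : ∀ v : V, glmk (indFn ({v} : Finset V)) ∈ L₁ ∨
          glmk (indFn ({v} : Finset V)) ∈ L₂ := by
        intro v
        have hmem : glmk (indFn ({v} : Finset V)) ∈ L₁ ⊔ L₂ := by
          rw [hsup]; trivial
        obtain ⟨y, hy, z, hz, hyz⟩ := Submodule.mem_sup.mp hmem
        have hq0 : qform e y z = 0 := horth y hy z hz
        by_cases hy0 : y = 0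
        · right; rw [← hyz, hy0, zero_add]; exact hz
        by_cases hz0 : z = 0
        · left; rw [← hyz, hz0, add_zero]; exact hy
        exact absurd ⟨y, z, hy0, hz0, hyz.symm, le_of_eq hq0.symm⟩ (hii v).2
      set P : V → Prop := fun v => glmk (indFn ({v} : Finset V)) ∈ L₁ with hP
      have hEa : ∃ a, P a := by
        by_contra hno
        push_neg at hno
        have hall : ∀ v : V, glmk (indFn ({v} : Finset V)) ∈ L₂ :=
          fun v => (hvin v).resolve_left (hno v)
        have htop : L₂ = ⊤ := top_of_deltas L₂ hall
        have hle : L₁ ≤ L₂ := by rw [htop]; exact le_top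
        exact h1 (by rw [← hinf, inf_eq_left.mpr hle])
      have hEb : ∃ b, ¬ P b := by
        by_contra hno
        push_neg at hno
        have htop : L₁ = ⊤ := top_of_deltas L₁ hno
        have hle : L₂ ≤ L₁ := by rw [htop]; exact le_top
        exact h2 (by rw [← hinf, inf_eq_right.mpr hle])
      obtain ⟨a, hPa⟩ := hEa
      obtain ⟨b, hPb⟩ := hEb
      obtain ⟨p⟩ := hconn.preconnected a b
      obtain ⟨u, w, hu, hw, hadj⟩ := exists_boundary P p hPa hPb
      have hw2 : glmk (indFn ({w} : Finset V)) ∈ L₂ := (hvin w).resolve_left hw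
      have huw := (mgraph_adj e hsym).mp hadj
      have hq := horth _ hu _ hw2
      rw [qform_delta e hsym huw.1] at hq
      have he0 : e u w = 0 := by exact_mod_cast neg_eq_zero.mp hq
      omega
    · intro hnd v
      by_cases hc : (SimpleGraph.induce (({v}ᶜ : Finset V) : Set V) (mgraph e)).Connected
      · exact irr_of_conn e hsym hconn hcard v hc
      · exfalso
        obtain ⟨A, B, hA, hB, hdisj, hcover, hvA, hvB, hE⟩ := cut_of_not_conn e hcard v hc
        exact hnd (decomp_of_cut e hsym hconn hcard v A B hA hB hdisj hcover hvA hvB hE)
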